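/- (Lemma 2 of the paper.) In the closed-loop coordinated system, for every coordination strategy ψ, every time t ∈ {1,…,T}, and every mean-field history z_{1:t} that occurs with positive probability, the conditional distribution of the joint state X_t given Z_{1:t} = z_{1:t} (and given the prescriptions Γ_{1:t}, which are functions of z_{1:t}) is the uniform distribution on H(z_t): P(X_t = x | Z_{1:t} = z_{1:t}) = 1(x ∈ H(z_t)) / |H(z_t)| for every x : Fin n → 𝒳. In particular, this conditional distribution depends only on z_t and not on z_{1:t-1} or on the strategy ψ. -/

import Mathlib

open scoped ENNReal

def emp {X : Type*} [DecidableEq X] {n : ℕ} (x : Fin n → X) : X → ℕ :=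
  fun a => (Finset.univ.filter (fun i => x i = a)).card

def Hset {X : Type*} [Fintype X] [DecidableEq X] (n : ℕ) (m : X → ℕ) : Finset (Fin n → X) :=
  Finset.univ.filter (fun x => emp x = m)

noncomputable def iid {W : Type*} [Fintype W] (n : ℕ) (ν : PMF W) : PMF (Fin n → W) :=
  PMF.ofFintype (fun w => ∏ i, ν (w i)) (by
    have h : ∑ j : W, ν j = 1 := by first | (rw [← ν.tsum_coe, tsum_fintype]) | simpa [tsum_fintype] using ν.tsum_coe
    rw [← Fintype.prod_sum]; simp [h])

variable {X U W : Type*} [Fintype X] [DecidableEq X] [Fintype U] [Fintype W]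

/-- The closed-loop law of the state trajectory `(X_0, …, X_t)` in the coordinated system:
initial states i.i.d. `PX`; the coordinator applies the prescription `ψ t z_{0:t} : X → U`
to each local state; local dynamics `f` driven by i.i.d. noises `PW t`. -/
noncomputable def hist (n : ℕ) (PX : PMF X) (PW : ℕ → PMF W)
    (f : ℕ → X → U → W → (X → ℕ) → X)
    (ψ : (t : ℕ) → (Fin (t + 1) → (X → ℕ)) → X → U) :
    (t : ℕ) → PMF (Fin (t + 1) → (Fin n → X))
  | 0 => (iid n PX).map (fun x _ => x)
  | t + 1 =>
    (hist n PX PW f ψ t).bind (fun xs =>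
      (iid n (PW t)).map (fun w =>
        Fin.snoc xs (fun i =>
          f t (xs (Fin.last t) i)
            (ψ t (fun s => emp (xs s)) (xs (Fin.last t) i))
            (w i) (emp (xs (Fin.last t))))))

lemma emp_comp {n : ℕ} (σ : Equiv.Perm (Fin n)) (x : Fin n → X) :
    emp (fun i => x (σ i)) = emp x := by
  funext a
  unfold emp
  exact Finset.card_bij' (fun i _ => σ i) (fun i _ => σ.symm i)
    (by simp) (by simp) (by simp) (by simp)

lemma iid_comp {n : ℕ} (ν : PMF W) (σ : Equiv.Perm (Fin n)) (w : Fin n → W) :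
    iid n ν (fun i => w (σ i)) = iid n ν w := by
  simp only [iid, PMF.ofFintype_apply]
  exact Equiv.prod_comp σ (fun i => ν (w i))

/-- precomposition equiv on profiles -/
def pc {α : Type*} {n : ℕ} (σ : Equiv.Perm (Fin n)) : (Fin n → α) ≃ (Fin n → α) :=
  Equiv.arrowCongr σ.symm (Equiv.refl α)

@[simp] lemma pc_apply {α : Type*} {n : ℕ} (σ : Equiv.Perm (Fin n)) (x : Fin n → α) :
    pc σ x = fun i => x (σ i) := rfl

@[simp] lemma pc_symm_apply {α : Type*} {n : ℕ} (σ : Equiv.Perm (Fin n)) (x : Fin n → α) :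
    (pc σ).symm x = fun i => x (σ.symm i) := rfl

lemma map_equiv_apply {α β : Type*} (e : α ≃ β) (p : PMF α) (b : β) :
    (p.map e) b = p (e.symm b) := by
  rw [PMF.map_apply]
  rw [tsum_eq_single (e.symm b)]
  · rw [if_pos (by simp)]
  · intro a ha
    rw [if_neg]
    intro h
    exact ha (by rw [h]; simp)

lemma iid_map_pc {n : ℕ} (ν : PMF W) (σ : Equiv.Perm (Fin n)) :
    (iid n ν).map (pc σ) = iid n ν := by
  ext w
  rw [map_equiv_apply]
  simp only [pc_symm_apply]
  exact iid_comp ν σ.symm w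

lemma hist_comp (n : ℕ) (PX : PMF X) (PW : ℕ → PMF W)
    (f : ℕ → X → U → W → (X → ℕ) → X)
    (ψ : (t : ℕ) → (Fin (t + 1) → (X → ℕ)) → X → U)
    (σ : Equiv.Perm (Fin n)) :
    ∀ t (ys : Fin (t + 1) → (Fin n → X)),
      hist n PX PW f ψ t (fun s i => ys s (σ i)) = hist n PX PW f ψ t ys := by
  intro t
  induction t with
  | zero =>
    intro ys
    have key : ∀ ys : Fin 1 → (Fin n → X),
        hist n PX PW f ψ 0 ys = iid n PX (ys 0) := by
      intro ys
      simp only [hist, PMF.map_apply]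
      rw [tsum_eq_single (ys 0)]
      · rw [if_pos (funext fun s => by rw [Subsingleton.elim s (0 : Fin 1)])]
      · intro b hb
        rw [if_neg]
        intro h
        exact hb (by rw [h])
    rw [key, key]
    exact iid_comp PX σ (ys 0)
  | succ t ih =>
    intro ys
    set F : (Fin (t + 1) → Fin n → X) → (Fin n → W) → (Fin (t + 1 + 1) → Fin n → X) :=
      fun xs w => Fin.snoc xs (fun i =>
        f t (xs (Fin.last t) i)
          (ψ t (fun s => emp (xs s)) (xs (Fin.last t) i))
          (w i) (emp (xs (Fin.last t)))) with hF
    have key : ∀ (xs : Fin (t + 1) → Fin n → X) (w : Fin n → W),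
        F (fun s i => xs s (σ i)) (fun i => w (σ i)) = fun s i => F xs w s (σ i) := by
      intro xs w
      funext s i
      refine Fin.lastCases ?_ (fun s' => ?_) s
      · simp [hF, Fin.snoc_last, emp_comp]
      · simp [hF, Fin.snoc_castSucc]
    -- trajectory equivs
    set E1 : (Fin (t + 1) → Fin n → X) ≃ (Fin (t + 1) → Fin n → X) :=
      Equiv.piCongrRight (fun _ => (pc σ : (Fin n → X) ≃ _)) with hE1
    set E2 : (Fin (t + 1 + 1) → Fin n → X) ≃ (Fin (t + 1 + 1) → Fin n → X) :=
      Equiv.piCongrRight (fun _ => (pc σ : (Fin n → X) ≃ _)) with hE2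
    have hmap : ∀ xs : Fin (t + 1) → Fin n → X,
        ((iid n (PW t)).map (F (fun s i => xs s (σ i)))) (fun s i => ys s (σ i))
          = ((iid n (PW t)).map (F xs)) ys := by
      intro xs
      have h1 : F (fun s i => xs s (σ i)) = (E2 : _ → _) ∘ F xs ∘ ((pc σ).symm : _ → _) := by
        funext w
        have h2 := key xs (fun i => w (σ.symm i))
        have h3 : (fun i => (fun j => w (σ.symm j)) (σ i)) = w := by
          funext i; simp
        rw [h3] at h2
        rw [Function.comp_apply, Function.comp_apply, pc_symm_apply, h2]
        rfl
      rw [h1]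
      rw [← Function.comp_assoc]
      rw [← PMF.map_comp, ← PMF.map_comp]
      rw [show ((pc σ).symm : (Fin n → W) → _) = ((pc σ.symm : (Fin n → W) ≃ _) : _ → _) by
        funext w; simp [pc]]
      rw [iid_map_pc]
      rw [map_equiv_apply]
      congr 1
      funext s i
      simp [hE2, pc]
    -- main computation
    simp only [hist, PMF.bind_apply]
    rw [← Equiv.tsum_eq E1 (fun xs => hist n PX PW f ψ t xs *
      ((iid n (PW t)).map (F xs)) (fun s i => ys s (σ i)))]
    refine tsum_congr fun xs => ?_
    have hE1x : (E1 xs : Fin (t+1) → Fin n → X) = fun s i => xs s (σ i) := rfl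
    rw [hE1x, ih xs, hmap xs]


lemma exists_comp_perm {α β : Type*} [Fintype α] [DecidableEq α] [DecidableEq β]
    (g h : α → β) (H : ∀ b, Fintype.card {a // g a = b} = Fintype.card {a // h a = b}) :
    ∃ σ : Equiv.Perm α, g ∘ σ = h := by
  have e : ∀ b, {a // h a = b} ≃ {a // g a = b} := fun b => Fintype.equivOfCardEq (H b).symm
  refine ⟨(Equiv.sigmaFiberEquiv h).symm.trans
    ((Equiv.sigmaCongrRight e).trans (Equiv.sigmaFiberEquiv g)), funext fun a => ?_⟩
  simp [Equiv.sigmaFiberEquiv, Equiv.sigmaCongrRight]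
  exact (e (h a) ⟨a, rfl⟩).2

lemma exists_perm_of_emp_eq {n : ℕ} (x y : Fin n → X) (h : emp x = emp y) :
    ∃ σ : Equiv.Perm (Fin n), x ∘ σ = y := by
  apply exists_comp_perm
  intro b
  have hx := congrFun h b
  simpa [emp, Fintype.card_subtype] using hx

/-- Lemma 2: under any coordination strategy `ψ`, conditioned on any positive-probability
mean-field history `z_{0:t}`, the joint state `X_t` is uniformly distributed on `H(z_t)`;
in particular this conditional law depends only on `z_t`, not on the earlier history or `ψ`. -/
theorem stmt4 (n : ℕ) (hn : 1 ≤ n) (PX : PMF X) (PW : ℕ → PMF W)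
    (f : ℕ → X → U → W → (X → ℕ) → X)
    (ψ : (t : ℕ) → (Fin (t + 1) → (X → ℕ)) → X → U)
    (t : ℕ) (z : Fin (t + 1) → (X → ℕ))
    (hz : 0 < ∑ xs ∈ Finset.univ.filter
        (fun xs : Fin (t + 1) → (Fin n → X) => ∀ s, emp (xs s) = z s),
        hist n PX PW f ψ t xs) :
    ∀ x : Fin n → X,
      (∑ xs ∈ Finset.univ.filter
          (fun xs : Fin (t + 1) → (Fin n → X) =>
            (∀ s, emp (xs s) = z s) ∧ xs (Fin.last t) = x),
          hist n PX PW f ψ t xs)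
        / (∑ xs ∈ Finset.univ.filter
            (fun xs : Fin (t + 1) → (Fin n → X) => ∀ s, emp (xs s) = z s),
            hist n PX PW f ψ t xs)
      = if x ∈ Hset n (z (Fin.last t)) then ((Hset n (z (Fin.last t))).card : ℝ≥0∞)⁻¹
        else 0 := by
  classical
  intro x
  set D := ∑ xs ∈ Finset.univ.filter
      (fun xs : Fin (t + 1) → (Fin n → X) => ∀ s, emp (xs s) = z s),
      hist n PX PW f ψ t xs with hD
  set S : (Fin n → X) → ℝ≥0∞ := fun y => ∑ xs ∈ Finset.univ.filter
      (fun xs : Fin (t + 1) → (Fin n → X) =>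
        (∀ s, emp (xs s) = z s) ∧ xs (Fin.last t) = y),
      hist n PX PW f ψ t xs with hS
  show S x / D = _
  by_cases hx : x ∈ Hset n (z (Fin.last t))
  swap
  · rw [if_neg hx]
    have hempty : (Finset.univ.filter
        (fun xs : Fin (t + 1) → (Fin n → X) =>
          (∀ s, emp (xs s) = z s) ∧ xs (Fin.last t) = x)) = ∅ := by
      rw [Finset.filter_eq_empty_iff]
      rintro xs - ⟨h1, h2⟩
      exact hx (by simp [Hset, ← h2, h1 (Fin.last t)])
    rw [hS]
    simp only [hempty, Finset.sum_empty]
    exact ENNReal.zero_div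
  · rw [if_pos hx]
    have hxemp : emp x = z (Fin.last t) := by simpa [Hset] using hx
    have hSconst : ∀ y ∈ Hset n (z (Fin.last t)), S y = S x := by
      intro y hy
      have hyemp : emp y = z (Fin.last t) := by simpa [Hset] using hy
      obtain ⟨σ, hσ⟩ := exists_perm_of_emp_eq x y (hxemp.trans hyemp.symm)
      rw [hS]
      refine Finset.sum_nbij' (fun xs => fun s i => xs s (σ.symm i))
        (fun xs => fun s i => xs s (σ i)) ?_ ?_ ?_ ?_ ?_
      · rintro xs hxs
        rw [Finset.mem_filter] at hxs ⊢
        obtain ⟨-, h1, h2⟩ := hxs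
        refine ⟨Finset.mem_univ _, fun s => by rw [emp_comp σ.symm (xs s)]; exact h1 s, ?_⟩
        funext i
        show xs (Fin.last t) (σ.symm i) = x i
        rw [h2]
        have := congrFun hσ (σ.symm i)
        simpa using this.symm
      · rintro xs hxs
        rw [Finset.mem_filter] at hxs ⊢
        obtain ⟨-, h1, h2⟩ := hxs
        refine ⟨Finset.mem_univ _, fun s => by rw [emp_comp σ (xs s)]; exact h1 s, ?_⟩
        funext i
        show xs (Fin.last t) (σ i) = y i
        rw [h2]
        exact congrFun hσ i
      · intro xs _; funext s i; simp
      · intro xs _; funext s i; simp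
      · intro xs _
        exact (hist_comp n PX PW f ψ σ.symm t xs).symm
    have hDsum : D = (Hset n (z (Fin.last t))).card * S x := by
      have h1 : D = ∑ y : Fin n → X, S y := by
        rw [hD]
        simp only [hS]
        have step := Finset.sum_fiberwise_eq_sum_filter
          (Finset.univ.filter (fun xs : Fin (t + 1) → (Fin n → X) => ∀ s, emp (xs s) = z s))
          Finset.univ (fun xs : Fin (t + 1) → (Fin n → X) => xs (Fin.last t))
          (hist n PX PW f ψ t)
        rw [show (Finset.univ.filter
            (fun xs : Fin (t + 1) → (Fin n → X) => ∀ s, emp (xs s) = z s))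
            = (Finset.univ.filter
            (fun xs : Fin (t + 1) → (Fin n → X) => ∀ s, emp (xs s) = z s)).filter
              (fun xs => xs (Fin.last t) ∈ Finset.univ) from
          (Finset.filter_true_of_mem (fun _ _ => Finset.mem_univ _)).symm]
        rw [← step]
        refine Finset.sum_congr rfl fun y _ => ?_
        rw [Finset.filter_filter]
      have h2 : ∀ y ∈ (Finset.univ : Finset (Fin n → X)),
          y ∉ Hset n (z (Fin.last t)) → S y = 0 := by
        intro y _ hy
        rw [hS]
        have hempty : (Finset.univ.filter
            (fun xs : Fin (t + 1) → (Fin n → X) =>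
              (∀ s, emp (xs s) = z s) ∧ xs (Fin.last t) = y)) = ∅ := by
          rw [Finset.filter_eq_empty_iff]
          rintro xs - ⟨ha, hb⟩
          exact hy (by simp [Hset, ← hb, ha (Fin.last t)])
        simp only [hempty, Finset.sum_empty]
      rw [h1, ← Finset.sum_subset (Finset.subset_univ (Hset n (z (Fin.last t)))) h2]
      rw [Finset.sum_congr rfl hSconst, Finset.sum_const, nsmul_eq_mul]
    have hc0 : ((Hset n (z (Fin.last t))).card : ℝ≥0∞) ≠ 0 := by
      have hpos : 0 < (Hset n (z (Fin.last t))).card := Finset.card_pos.mpr ⟨x, hx⟩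
      exact_mod_cast hpos.ne'
    have hS0 : S x ≠ 0 := by
      intro h0
      rw [hDsum, h0, mul_zero] at hz
      exact lt_irrefl 0 hz
    have hStop : S x ≠ ⊤ := by
      rw [hS]
      refine (ENNReal.sum_lt_top.mpr fun xs _ => ?_).ne
      exact (PMF.apply_lt_top _ _)
    rw [hDsum, ENNReal.div_eq_inv_mul,
      ENNReal.mul_inv (Or.inl hc0) (Or.inl (ENNReal.natCast_ne_top _)),
      mul_assoc, ENNReal.inv_mul_cancel hS0 hStop, mul_one]
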